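/- Let A = {-2^{b-1}, ..., 2^{b-1}-1} for an integer b ≥ 1, q > 0, α > 0. The map θ ↦ Q_d(θ) = Σ_{i∈A} iq · P_α(iq|θ) is strictly increasing on ℝ. -/
import Mathlib

open Finset

noncomputable def softPMF (A : Finset ℤ) (q α θ : ℝ) (i : ℤ) : ℝ :=
  Real.exp (-α * (θ - i * q) ^ 2) / ∑ j ∈ A, Real.exp (-α * (θ - j * q) ^ 2)

noncomputable def softQuant (A : Finset ℤ) (q α θ : ℝ) : ℝ :=
  ∑ i ∈ A, (i * q) * softPMF A q α θ i

noncomputable def wfun (q α θ : ℝ) (i : ℤ) : ℝ := Real.exp (-α * (θ - i * q) ^ 2)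

lemma key_expand (s : Finset ℤ) (x g w : ℤ → ℝ) :
    ∑ i ∈ s, ∑ j ∈ s, (x i - x j) * (g i - g j) * (w i * w j)
      = 2 * ((∑ i ∈ s, x i * (g i * w i)) * (∑ j ∈ s, w j)
          - (∑ i ∈ s, x i * w i) * (∑ j ∈ s, g j * w j)) := by
  have h1 : (∑ i ∈ s, x i * (g i * w i)) * (∑ j ∈ s, w j)
      = ∑ i ∈ s, ∑ j ∈ s, x i * g i * (w i * w j) := by
    rw [Finset.sum_mul_sum]
    exact Finset.sum_congr rfl fun i _ => Finset.sum_congr rfl fun j _ => by ring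
  have h2 : (∑ i ∈ s, x i * w i) * (∑ j ∈ s, g j * w j)
      = ∑ i ∈ s, ∑ j ∈ s, x i * g j * (w i * w j) := by
    rw [Finset.sum_mul_sum]
    exact Finset.sum_congr rfl fun i _ => Finset.sum_congr rfl fun j _ => by ring
  have h3 : ∑ i ∈ s, ∑ j ∈ s, x j * g i * (w i * w j)
      = ∑ i ∈ s, ∑ j ∈ s, x i * g j * (w i * w j) := by
    rw [Finset.sum_comm]
    exact Finset.sum_congr rfl fun i _ => Finset.sum_congr rfl fun j _ => by ring
  have h4 : ∑ i ∈ s, ∑ j ∈ s, x j * g j * (w i * w j)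
      = ∑ i ∈ s, ∑ j ∈ s, x i * g i * (w i * w j) := by
    rw [Finset.sum_comm]
    exact Finset.sum_congr rfl fun i _ => Finset.sum_congr rfl fun j _ => by ring
  have hterm : ∀ i j : ℤ, (x i - x j) * (g i - g j) * (w i * w j)
      = x i * g i * (w i * w j) - x i * g j * (w i * w j)
        - x j * g i * (w i * w j) + x j * g j * (w i * w j) := by
    intros; ring
  simp_rw [hterm, Finset.sum_add_distrib, Finset.sum_sub_distrib]
  rw [h3, h4, h1, h2]
  ring

lemma key_pos (s : Finset ℤ) (x g w : ℤ → ℝ) (hw : ∀ i ∈ s, 0 < w i)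
    (hx : StrictMono x) (hg : StrictMono g)
    (i0 j0 : ℤ) (hi0 : i0 ∈ s) (hj0 : j0 ∈ s) (hij : i0 < j0) :
    (∑ i ∈ s, x i * w i) * (∑ j ∈ s, g j * w j)
      < (∑ i ∈ s, x i * (g i * w i)) * (∑ j ∈ s, w j) := by
  have key : 0 < ∑ i ∈ s, ∑ j ∈ s, (x i - x j) * (g i - g j) * (w i * w j) := by
    have hnn : ∀ i ∈ s, ∀ j ∈ s, 0 ≤ (x i - x j) * (g i - g j) * (w i * w j) := by
      intro i hi j hj
      have hww : 0 < w i * w j := mul_pos (hw i hi) (hw j hj)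
      rcases lt_trichotomy i j with h | h | h
      · have h1 : 0 < (x i - x j) * (g i - g j) :=
          mul_pos_of_neg_of_neg (by linarith [hx h]) (by linarith [hg h])
        positivity
      · subst h; simp
      · have h1 : 0 < (x i - x j) * (g i - g j) :=
          mul_pos (by linarith [hx h]) (by linarith [hg h])
        positivity
    have hposterm : 0 < (x i0 - x j0) * (g i0 - g j0) * (w i0 * w j0) := by
      have h1 : 0 < (x i0 - x j0) * (g i0 - g j0) :=
        mul_pos_of_neg_of_neg (by linarith [hx hij]) (by linarith [hg hij])
      have hww : 0 < w i0 * w j0 := mul_pos (hw i0 hi0) (hw j0 hj0)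
      positivity
    calc (0:ℝ) < (x i0 - x j0) * (g i0 - g j0) * (w i0 * w j0) := hposterm
      _ ≤ ∑ j ∈ s, (x i0 - x j) * (g i0 - g j) * (w i0 * w j) :=
          Finset.single_le_sum (fun j hj => hnn i0 hi0 j hj) hj0
      _ ≤ ∑ i ∈ s, ∑ j ∈ s, (x i - x j) * (g i - g j) * (w i * w j) :=
          Finset.single_le_sum
            (fun i hi => Finset.sum_nonneg fun j hj => hnn i hi j hj) hi0
  rw [key_expand] at key
  linarith

lemma softQuant_lt (s : Finset ℤ) (q α : ℝ) (hq : 0 < q) (hα : 0 < α)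
    (i0 j0 : ℤ) (hi0 : i0 ∈ s) (hj0 : j0 ∈ s) (hij : i0 < j0)
    {θ₁ θ₂ : ℝ} (hθ : θ₁ < θ₂) :
    softQuant s q α θ₁ < softQuant s q α θ₂ := by
  have hwpos : ∀ θ i, 0 < wfun q α θ i := fun θ i => Real.exp_pos _
  have hWpos : ∀ θ, 0 < ∑ j ∈ s, wfun q α θ j :=
    fun θ => Finset.sum_pos (fun j _ => hwpos θ j) ⟨_, hi0⟩
  have hform : ∀ θ, softQuant s q α θ
      = (∑ i ∈ s, (i * q) * wfun q α θ i) / (∑ j ∈ s, wfun q α θ j) := by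
    intro θ
    rw [softQuant, Finset.sum_div]
    exact Finset.sum_congr rfl fun i _ => by
      rw [softPMF, wfun, mul_div_assoc]
      rfl
  rw [hform, hform, div_lt_div_iff₀ (hWpos θ₁) (hWpos θ₂)]
  set g : ℤ → ℝ := fun i => Real.exp (α * (θ₁ ^ 2 - θ₂ ^ 2) + 2 * α * (θ₂ - θ₁) * q * i)
    with hgdef
  have hg : StrictMono g := by
    intro i j h
    apply Real.exp_lt_exp.2
    have hij' : (i : ℝ) < j := by exact_mod_cast h
    have hd : 0 < 2 * α * (θ₂ - θ₁) * q := by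
      have : 0 < θ₂ - θ₁ := by linarith
      positivity
    nlinarith
  have hx : StrictMono (fun i : ℤ => (i : ℝ) * q) := by
    intro i j h
    have : (i : ℝ) < j := by exact_mod_cast h
    exact mul_lt_mul_of_pos_right this hq
  have hw2 : ∀ i, wfun q α θ₂ i = g i * wfun q α θ₁ i := by
    intro i
    rw [hgdef, wfun, wfun, ← Real.exp_add]
    congr 1
    ring
  have e1 : ∑ i ∈ s, (i * q) * wfun q α θ₂ i
      = ∑ i ∈ s, ((i : ℝ) * q) * (g i * wfun q α θ₁ i) :=
    Finset.sum_congr rfl fun i _ => by rw [hw2]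
  have e2 : ∑ j ∈ s, wfun q α θ₂ j = ∑ j ∈ s, g j * wfun q α θ₁ j :=
    Finset.sum_congr rfl fun j _ => by rw [hw2]
  rw [e1, e2]
  exact key_pos s (fun i => (i : ℝ) * q) g (wfun q α θ₁) (fun i _ => hwpos θ₁ i)
    hx hg _ _ hi0 hj0 hij

/-- For the `b`-bit index set `A = {-2^{b-1}, ..., 2^{b-1}-1}`, the soft
quantizer `θ ↦ Q_d(θ)` is strictly increasing on `ℝ`. -/
theorem softQuant_strictMono (b : ℕ) (hb : 1 ≤ b) (q α : ℝ)
    (hq : 0 < q) (hα : 0 < α) :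
    StrictMono (fun θ =>
      softQuant (Finset.Icc (-(2 ^ (b - 1)) : ℤ) (2 ^ (b - 1) - 1)) q α θ) := by
  have hpow : (1 : ℤ) ≤ 2 ^ (b - 1) := one_le_pow₀ (by norm_num)
  have hi0 : (-(2 ^ (b - 1)) : ℤ) ∈ Finset.Icc (-(2 ^ (b - 1)) : ℤ) (2 ^ (b - 1) - 1) :=
    Finset.mem_Icc.mpr ⟨le_refl _, by linarith⟩
  have hj0 : ((2 ^ (b - 1) - 1) : ℤ) ∈ Finset.Icc (-(2 ^ (b - 1)) : ℤ) (2 ^ (b - 1) - 1) :=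
    Finset.mem_Icc.mpr ⟨by linarith, le_refl _⟩
  have hij : (-(2 ^ (b - 1)) : ℤ) < 2 ^ (b - 1) - 1 := by linarith
  intro θ₁ θ₂ hθ
  exact softQuant_lt _ q α hq hα _ _ hi0 hj0 hij hθ
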